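/- Let X and Z be real symmetric positive definite n×n matrices, and define W := X^{1/2} (X^{1/2} Z X^{1/2})^{−1/2} X^{1/2}. Then W is symmetric positive definite, W Z W = X, and W is the unique symmetric positive definite matrix satisfying W Z W = X. -/

import Mathlib

open Matrix

/-- Congruence by an invertible matrix preserves positive definiteness (real case). -/
lemma posDef_conj_aux {n : ℕ} (B M : Matrix (Fin n) (Fin n) ℝ) (hM : M.PosDef)
    (hB : IsUnit B) : (Bᴴ * M * B).PosDef := by
  exact hM.conjTranspose_mul_mul_same (Matrix.mulVec_injective_of_isUnit hB)

/-- The Nesterov–Todd scaling matrix `W := X^{1/2} (X^{1/2} Z X^{1/2})^{−1/2} X^{1/2}` is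
symmetric positive definite, satisfies `W Z W = X`, and is the unique symmetric positive
definite matrix with this property. Here `sX` is the (unique) symmetric positive definite
square root of `X` and `M1` is the symmetric positive definite square root of `sX * Z * sX`. -/
theorem nt_scaling_matrix (n : ℕ) (X Z sX M1 : Matrix (Fin n) (Fin n) ℝ)
    (hX : X.PosDef) (hZ : Z.PosDef)
    (hsX : sX.PosDef) (hsX2 : sX * sX = X)
    (hM1 : M1.PosDef) (hM12 : M1 * M1 = sX * Z * sX) :
    (sX * M1⁻¹ * sX).PosDef ∧
      (sX * M1⁻¹ * sX) * Z * (sX * M1⁻¹ * sX) = X ∧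
      ∀ W : Matrix (Fin n) (Fin n) ℝ, W.PosDef → W * Z * W = X → W = sX * M1⁻¹ * sX := by
  have hsXd : IsUnit sX.det := hsX.det_pos.ne'.isUnit
  have hM1d : IsUnit M1.det := hM1.det_pos.ne'.isUnit
  have h1 : sX⁻¹ * sX = 1 := Matrix.nonsing_inv_mul sX hsXd
  have h2 : sX * sX⁻¹ = 1 := Matrix.mul_nonsing_inv sX hsXd
  have h3 : M1⁻¹ * M1 = 1 := Matrix.nonsing_inv_mul M1 hM1d
  have h4 : M1 * M1⁻¹ = 1 := Matrix.mul_nonsing_inv M1 hM1d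
  have c1 : ∀ C, sX⁻¹ * (sX * C) = C := fun C => by rw [← Matrix.mul_assoc, h1, one_mul]
  have c2 : ∀ C, sX * (sX⁻¹ * C) = C := fun C => by rw [← Matrix.mul_assoc, h2, one_mul]
  have c3 : ∀ C, M1⁻¹ * (M1 * C) = C := fun C => by rw [← Matrix.mul_assoc, h3, one_mul]
  have c4 : ∀ C, M1 * (M1⁻¹ * C) = C := fun C => by rw [← Matrix.mul_assoc, h4, one_mul]
  have hWpd : (sX * M1⁻¹ * sX).PosDef := by
    have := posDef_conj_aux sX M1⁻¹ hM1.inv hsX.isUnit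
    rwa [hsX.isHermitian.eq] at this
  have hZeq : Z = sX⁻¹ * (M1 * (M1 * sX⁻¹)) := by
    rw [← Matrix.mul_assoc M1 M1 sX⁻¹, hM12]
    simp [Matrix.mul_assoc, c1, h2]
  refine ⟨hWpd, ?_, ?_⟩
  · rw [hZeq, ← hsX2]
    simp [Matrix.mul_assoc, c1, c2, c3, c4]
  · intro W hW hWZW
    have hXss : X = sX * sX := hsX2.symm
    set B := (sX⁻¹ * M1)ᴴ * W * (sX⁻¹ * M1) with hBdef
    have hBalt : B = M1 * (sX⁻¹ * (W * (sX⁻¹ * M1))) := by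
      rw [hBdef, conjTranspose_mul, hM1.isHermitian.eq, hsX.inv.isHermitian.eq]
      simp [Matrix.mul_assoc]
    have hBpd : B.PosDef :=
      posDef_conj_aux (sX⁻¹ * M1) W hW (hsX.inv.isUnit.mul hM1.isUnit)
    have hWX : W * (sX⁻¹ * (M1 * (M1 * (sX⁻¹ * W)))) = X := by
      have h := hWZW
      rw [hZeq] at h
      simpa [Matrix.mul_assoc] using h
    have hWX' : ∀ C, W * (sX⁻¹ * (M1 * (M1 * (sX⁻¹ * (W * C))))) = X * C := fun C => by
      rw [← hWX]
      simp [Matrix.mul_assoc]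
    have hBsq : B ^ 2 = M1 ^ 2 := by
      rw [pow_two, pow_two, hBalt]
      simp [Matrix.mul_assoc, hWX', hXss, c1, c2, c3, c4]
    have hBM1 : B = M1 := open MatrixOrder in
      (CFC.sq_eq_sq_iff B M1 hBpd.posSemidef.nonneg hM1.posSemidef.nonneg).mp hBsq
    have hWrec : W = sX * (M1⁻¹ * (B * (M1⁻¹ * sX))) := by
      rw [hBalt]
      simp [Matrix.mul_assoc, c1, c2, c3, c4, h1, h2, h3, h4]
    rw [hWrec, hBM1]
    simp [Matrix.mul_assoc, c4]
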